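/- Let U and Y be real separable Hilbert spaces and G1, G2 : U → Y Lipschitz maps with C = Lip(G1) + Lip(G2). For any probability measures μ, μ' on U with finite second moments, E_{u'∼μ'}‖G1(u') − G2(u')‖² ≤ E_{u∼μ}‖G1(u) − G2(u)‖² + C·√(4C²(m₂(μ) + m₂(μ')) + 16‖G1(0)‖² + 16‖G2(0)‖²) · W2(μ, μ'), where m₂(ν) = E_{u∼ν}‖u‖² and W2 is the 2-Wasserstein distance. -/

import Mathlib

open MeasureTheory

/-- The 2-Wasserstein distance, defined as the square root of the infimum of
`∫ d(x,y)² dγ` over couplings `γ` of `μ` and `ν`. -/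
noncomputable def wasserstein2 {X : Type*} [MeasurableSpace X] [PseudoEMetricSpace X]
    (μ ν : Measure X) : ℝ :=
  Real.sqrt
    (⨅ γ ∈ {γ : Measure (X × X) |
        γ.map Prod.fst = μ ∧ γ.map Prod.snd = ν},
      ∫⁻ z, edist z.1 z.2 ^ 2 ∂γ).toReal

section Aux

open scoped ENNReal

variable {U Y : Type*}
    [NormedAddCommGroup U] [InnerProductSpace ℝ U]
    [SecondCountableTopology U] [MeasurableSpace U] [BorelSpace U]
    [NormedAddCommGroup Y] [InnerProductSpace ℝ Y]

/-- Pointwise bound `‖G1 u - G2 u‖ ≤ C‖u‖ + (‖G1 0‖ + ‖G2 0‖)`. -/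
lemma aux_norm_bound (G1 G2 : U → Y) (K1 K2 : NNReal)
    (h1 : LipschitzWith K1 G1) (h2 : LipschitzWith K2 G2)
    (C : ℝ) (hC : C = (K1 : ℝ) + (K2 : ℝ)) (u : U) :
    ‖G1 u - G2 u‖ ≤ C * ‖u‖ + (‖G1 0‖ + ‖G2 0‖) := by
  have e : G1 u - G2 u = ((G1 u - G1 0) - (G2 u - G2 0)) + (G1 0 - G2 0) := by abel
  have l1 : ‖G1 u - G1 0‖ ≤ (K1 : ℝ) * ‖u‖ := by
    have := h1.dist_le_mul u 0
    simpa [dist_eq_norm] using this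
  have l2 : ‖G2 u - G2 0‖ ≤ (K2 : ℝ) * ‖u‖ := by
    have := h2.dist_le_mul u 0
    simpa [dist_eq_norm] using this
  calc ‖G1 u - G2 u‖ ≤ ‖(G1 u - G1 0) - (G2 u - G2 0)‖ + ‖G1 0 - G2 0‖ := by
        rw [e]; exact norm_add_le _ _
    _ ≤ (‖G1 u - G1 0‖ + ‖G2 u - G2 0‖) + (‖G1 0‖ + ‖G2 0‖) :=
        add_le_add (norm_sub_le _ _) (norm_sub_le _ _)
    _ ≤ ((K1 : ℝ) * ‖u‖ + (K2 : ℝ) * ‖u‖) + (‖G1 0‖ + ‖G2 0‖) := by linarith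
    _ = C * ‖u‖ + (‖G1 0‖ + ‖G2 0‖) := by rw [hC]; ring

/-- Pointwise "locally Lipschitz" bound for `F u = ‖G1 u - G2 u‖²`. -/
lemma aux_ptwise (G1 G2 : U → Y) (K1 K2 : NNReal)
    (h1 : LipschitzWith K1 G1) (h2 : LipschitzWith K2 G2)
    (C : ℝ) (hC : C = (K1 : ℝ) + (K2 : ℝ)) (u v : U) :
    ‖G1 v - G2 v‖ ^ 2 - ‖G1 u - G2 u‖ ^ 2 ≤
      C * ((C * (‖u‖ + ‖v‖) + 2 * (‖G1 0‖ + ‖G2 0‖)) * ‖u - v‖) := by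
  have hC0 : (0 : ℝ) ≤ C := by rw [hC]; positivity
  set a := G1 u - G2 u with ha
  set b := G1 v - G2 v with hb
  have hba : ‖b - a‖ ≤ C * ‖u - v‖ := by
    have e : b - a = (G1 v - G1 u) - (G2 v - G2 u) := by rw [ha, hb]; abel
    have l1 : ‖G1 v - G1 u‖ ≤ (K1 : ℝ) * ‖u - v‖ := by
      have := h1.dist_le_mul v u
      simpa [dist_eq_norm, norm_sub_rev (G1 v), norm_sub_rev v] using this
    have l2 : ‖G2 v - G2 u‖ ≤ (K2 : ℝ) * ‖u - v‖ := by
      have := h2.dist_le_mul v u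
      simpa [dist_eq_norm, norm_sub_rev (G2 v), norm_sub_rev v] using this
    calc ‖b - a‖ ≤ ‖G1 v - G1 u‖ + ‖G2 v - G2 u‖ := by rw [e]; exact norm_sub_le _ _
      _ ≤ (K1 : ℝ) * ‖u - v‖ + (K2 : ℝ) * ‖u - v‖ := add_le_add l1 l2
      _ = C * ‖u - v‖ := by rw [hC]; ring
  have hsum : ‖a‖ + ‖b‖ ≤ C * (‖u‖ + ‖v‖) + 2 * (‖G1 0‖ + ‖G2 0‖) := by
    have := aux_norm_bound G1 G2 K1 K2 h1 h2 C hC u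
    have := aux_norm_bound G1 G2 K1 K2 h1 h2 C hC v
    rw [ha, hb]; nlinarith
  have h3 : ‖b‖ - ‖a‖ ≤ ‖b - a‖ := norm_sub_norm_le _ _
  have h4 : ‖b‖ - ‖a‖ ≤ C * ‖u - v‖ := h3.trans hba
  nlinarith [norm_nonneg a, norm_nonneg b, norm_nonneg (u - v), norm_nonneg (b - a),
    mul_nonneg hC0 (norm_nonneg (u - v))]

/-- Key bound: via any finite-cost coupling. -/
lemma aux_coupling_bound (G1 G2 : U → Y) (K1 K2 : NNReal)
    (h1 : LipschitzWith K1 G1) (h2 : LipschitzWith K2 G2)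
    (C : ℝ) (hC : C = (K1 : ℝ) + (K2 : ℝ))
    (μ μ' : Measure U) [IsProbabilityMeasure μ] [IsProbabilityMeasure μ']
    (hm : Integrable (fun u => ‖u‖ ^ 2) μ) (hm' : Integrable (fun u => ‖u‖ ^ 2) μ')
    (γ : Measure (U × U)) (hfst : γ.map Prod.fst = μ) (hsnd : γ.map Prod.snd = μ')
    (hcost : (∫⁻ z, edist z.1 z.2 ^ 2 ∂γ) ≠ ⊤) :
    (∫ u, ‖G1 u - G2 u‖ ^ 2 ∂μ') - ∫ u, ‖G1 u - G2 u‖ ^ 2 ∂μ ≤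
      C * Real.sqrt (4 * C ^ 2 * ((∫ u, ‖u‖ ^ 2 ∂μ) + ∫ u, ‖u‖ ^ 2 ∂μ') +
          16 * ‖G1 0‖ ^ 2 + 16 * ‖G2 0‖ ^ 2) *
        Real.sqrt (∫⁻ z, edist z.1 z.2 ^ 2 ∂γ).toReal := by
  have hC0 : (0 : ℝ) ≤ C := by rw [hC]; positivity
  set c : ℝ := ‖G1 0‖ + ‖G2 0‖ with hc
  have hc0 : 0 ≤ c := by positivity
  set F : U → ℝ := fun u => ‖G1 u - G2 u‖ ^ 2 with hF
  have hFcont : Continuous F := ((h1.continuous.sub h2.continuous).norm.pow 2)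
  have hFle : ∀ u, F u ≤ 2 * C ^ 2 * ‖u‖ ^ 2 + 2 * c ^ 2 := by
    intro u
    have hb := aux_norm_bound G1 G2 K1 K2 h1 h2 C hC u
    have h0 : (0:ℝ) ≤ ‖G1 u - G2 u‖ := norm_nonneg _
    have hsq : ‖G1 u - G2 u‖ ^ 2 ≤ (C * ‖u‖ + (‖G1 0‖ + ‖G2 0‖)) ^ 2 := by
      have hr : (0:ℝ) ≤ C * ‖u‖ + (‖G1 0‖ + ‖G2 0‖) := h0.trans hb
      nlinarith
    simp only [hF, hc]
    nlinarith [sq_nonneg (C * ‖u‖ - (‖G1 0‖ + ‖G2 0‖))]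
  have hF0 : ∀ u, 0 ≤ F u := fun u => by positivity
  -- γ is a probability measure
  have hγuniv : γ Set.univ = 1 := by
    have : γ.map Prod.fst Set.univ = γ Set.univ := by
      rw [Measure.map_apply measurable_fst MeasurableSet.univ]; rfl
    rw [hfst] at this; rw [← this, measure_univ]
  have hγprob : IsProbabilityMeasure γ := ⟨hγuniv⟩
  -- integrability of F
  have hFμ : Integrable F μ := by
    refine Integrable.mono' ((hm.const_mul (2 * C ^ 2)).add (integrable_const (2 * c ^ 2)))
      hFcont.aestronglyMeasurable (ae_of_all _ fun u => ?_)
    rw [Real.norm_of_nonneg (hF0 u)]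
    exact hFle u
  have hFμ' : Integrable F μ' := by
    refine Integrable.mono' ((hm'.const_mul (2 * C ^ 2)).add (integrable_const (2 * c ^ 2)))
      hFcont.aestronglyMeasurable (ae_of_all _ fun u => ?_)
    rw [Real.norm_of_nonneg (hF0 u)]
    exact hFle u
  -- transport to γ
  have hfst_meas : AEMeasurable (Prod.fst : U × U → U) γ := measurable_fst.aemeasurable
  have hsnd_meas : AEMeasurable (Prod.snd : U × U → U) γ := measurable_snd.aemeasurable
  have hx2 : Integrable (fun z : U × U => ‖z.1‖ ^ 2) γ := by
    have : Integrable (fun u : U => ‖u‖ ^ 2) (γ.map Prod.fst) := hfst ▸ hm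
    exact (integrable_map_measure (continuous_norm.pow 2).aestronglyMeasurable hfst_meas).mp this
  have hy2 : Integrable (fun z : U × U => ‖z.2‖ ^ 2) γ := by
    have : Integrable (fun u : U => ‖u‖ ^ 2) (γ.map Prod.snd) := hsnd ▸ hm'
    exact (integrable_map_measure (continuous_norm.pow 2).aestronglyMeasurable hsnd_meas).mp this
  have hFfst : Integrable (fun z : U × U => F z.1) γ := by
    have : Integrable F (γ.map Prod.fst) := hfst ▸ hFμ
    exact (integrable_map_measure hFcont.aestronglyMeasurable hfst_meas).mp this
  have hFsnd : Integrable (fun z : U × U => F z.2) γ := by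
    have : Integrable F (γ.map Prod.snd) := hsnd ▸ hFμ'
    exact (integrable_map_measure hFcont.aestronglyMeasurable hsnd_meas).mp this
  -- the distance function
  set d : U × U → ℝ := fun z => ‖z.1 - z.2‖ with hd
  have hdcont : Continuous d := (continuous_fst.sub continuous_snd).norm
  have hd0 : ∀ z, 0 ≤ d z := fun z => norm_nonneg _
  have hedist_eq : ∀ z : U × U, ((edist z.1 z.2 ^ 2).toReal) = d z ^ 2 := by
    intro z
    rw [edist_dist, dist_eq_norm, ← ENNReal.ofReal_pow (norm_nonneg _),
      ENNReal.toReal_ofReal (by positivity)]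
  have hedist_meas : AEMeasurable (fun z : U × U => edist z.1 z.2 ^ 2) γ :=
    ((continuous_fst.edist continuous_snd).measurable.pow_const 2).aemeasurable
  have hd2int : Integrable (fun z : U × U => d z ^ 2) γ := by
    have := integrable_toReal_of_lintegral_ne_top hedist_meas hcost
    refine this.congr (ae_of_all _ fun z => hedist_eq z)
  have hd2eq : ∫ z, d z ^ 2 ∂γ = (∫⁻ z, edist z.1 z.2 ^ 2 ∂γ).toReal := by
    rw [← integral_toReal hedist_meas (ae_lt_top' hedist_meas hcost)]
    exact integral_congr_ae (ae_of_all _ fun z => (hedist_eq z).symm)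
  -- the weight function
  set g : U × U → ℝ := fun z => C * (‖z.1‖ + ‖z.2‖) + 2 * c with hg
  have hg0 : ∀ z, 0 ≤ g z := fun z => by positivity
  -- MemLp facts
  have hgx : MemLp (fun z : U × U => ‖z.1‖) 2 γ :=
    (memLp_two_iff_integrable_sq continuous_fst.norm.aestronglyMeasurable).mpr hx2
  have hgy : MemLp (fun z : U × U => ‖z.2‖) 2 γ :=
    (memLp_two_iff_integrable_sq continuous_snd.norm.aestronglyMeasurable).mpr hy2
  have hgL2 : MemLp g 2 γ := ((hgx.add hgy).const_mul C).add (memLp_const (2 * c))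
  have hdL2 : MemLp d 2 γ :=
    (memLp_two_iff_integrable_sq hdcont.aestronglyMeasurable).mpr hd2int
  have hgdint : Integrable (fun z => g z * d z) γ := by
    have h12 : (1 : ℝ≥0∞) / 1 = 1 / 2 + 1 / 2 := by
      rw [one_div_one, ENNReal.add_halves]
    have := hdL2.smul hgL2 (r := 1) (hpqr := ⟨by rw [inv_one, ← one_div, ENNReal.add_halves]⟩)
    rw [memLp_one_iff_integrable] at this
    exact this.congr (ae_of_all _ fun z => rfl)
  -- main chain
  have step1 : (∫ u, F u ∂μ') - ∫ u, F u ∂μ = ∫ z, (F z.2 - F z.1) ∂γ := by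
    rw [integral_sub hFsnd hFfst, ← hfst, ← hsnd,
      integral_map hfst_meas hFcont.aestronglyMeasurable,
      integral_map hsnd_meas hFcont.aestronglyMeasurable]
  have step2 : ∫ z, (F z.2 - F z.1) ∂γ ≤ ∫ z, C * (g z * d z) ∂γ := by
    refine integral_mono (hFsnd.sub hFfst) (hgdint.const_mul C) fun z => ?_
    have := aux_ptwise G1 G2 K1 K2 h1 h2 C hC z.1 z.2
    simpa [hF, hg, hd, hc, mul_assoc] using this
  have step3 : ∫ z, C * (g z * d z) ∂γ = C * ∫ z, g z * d z ∂γ := integral_const_mul C _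
  have conj : (2 : ℝ).HolderConjugate 2 := ⟨by norm_num, by norm_num, by norm_num⟩
  have hof2 : ENNReal.ofReal (2 : ℝ) = 2 := by norm_num
  have step4 : ∫ z, g z * d z ∂γ ≤
      (∫ z, g z ^ (2:ℝ) ∂γ) ^ ((1:ℝ)/2) * (∫ z, d z ^ (2:ℝ) ∂γ) ^ ((1:ℝ)/2) :=
    integral_mul_le_Lp_mul_Lq_of_nonneg conj (ae_of_all _ hg0) (ae_of_all _ hd0)
      (hof2 ▸ hgL2) (hof2 ▸ hdL2)
  have hrpow_pow : ∀ (f : U × U → ℝ), (∀ z, 0 ≤ f z) →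
      (∫ z, f z ^ (2:ℝ) ∂γ) = ∫ z, f z ^ 2 ∂γ := by
    intro f _
    refine integral_congr_ae (ae_of_all _ fun z => ?_)
    exact Real.rpow_two (f z)
  have hsqrt_eq : ∀ x : ℝ, x ^ ((1:ℝ)/2) = Real.sqrt x := fun x =>
    (Real.sqrt_eq_rpow x).symm
  -- bound on ∫ g²
  set S : ℝ := 4 * C ^ 2 * ((∫ u, ‖u‖ ^ 2 ∂μ) + ∫ u, ‖u‖ ^ 2 ∂μ') +
      16 * ‖G1 0‖ ^ 2 + 16 * ‖G2 0‖ ^ 2 with hS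
  have hg2le : ∫ z, g z ^ 2 ∂γ ≤ S := by
    have hptg : ∀ z : U × U, g z ^ 2 ≤
        4 * C ^ 2 * (‖z.1‖ ^ 2 + ‖z.2‖ ^ 2) + (16 * ‖G1 0‖ ^ 2 + 16 * ‖G2 0‖ ^ 2) := by
      intro z
      have h1' : (0:ℝ) ≤ ‖z.1‖ := norm_nonneg _
      have h2' : (0:ℝ) ≤ ‖z.2‖ := norm_nonneg _
      have h3' : (0:ℝ) ≤ ‖G1 0‖ := norm_nonneg _
      have h4' : (0:ℝ) ≤ ‖G2 0‖ := norm_nonneg _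
      simp only [hg, hc]
      nlinarith [sq_nonneg (C * (‖z.1‖ + ‖z.2‖) - 2 * (‖G1 0‖ + ‖G2 0‖)),
        sq_nonneg (‖z.1‖ - ‖z.2‖), sq_nonneg (‖G1 0‖ - ‖G2 0‖),
        mul_nonneg hC0 (mul_nonneg h1' h2'), sq_nonneg C]
    have hA : Integrable (fun z : U × U => 4 * C ^ 2 * (‖z.1‖ ^ 2 + ‖z.2‖ ^ 2)) γ := by
      exact (hx2.add hy2).const_mul (4 * C ^ 2)
    have hint2 : Integrable (fun z : U × U =>
        4 * C ^ 2 * (‖z.1‖ ^ 2 + ‖z.2‖ ^ 2) + (16 * ‖G1 0‖ ^ 2 + 16 * ‖G2 0‖ ^ 2)) γ :=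
      hA.add (integrable_const _)
    have := integral_mono hgL2.integrable_sq hint2 hptg
    refine this.trans ?_
    have e1 : ∫ z : U × U, ‖z.1‖ ^ 2 ∂γ = ∫ u, ‖u‖ ^ 2 ∂μ := by
      rw [← hfst, integral_map hfst_meas (by fun_prop : Continuous fun u : U => ‖u‖ ^ 2).aestronglyMeasurable]
    have e2 : ∫ z : U × U, ‖z.2‖ ^ 2 ∂γ = ∫ u, ‖u‖ ^ 2 ∂μ' := by
      rw [← hsnd, integral_map hsnd_meas (by fun_prop : Continuous fun u : U => ‖u‖ ^ 2).aestronglyMeasurable]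
    rw [integral_add hA (integrable_const _), integral_const_mul _ _,
      integral_add hx2 hy2, integral_const, probReal_univ, e1, e2, hS]
    simp
    ring_nf
    linarith
  have hS0 : 0 ≤ S := le_trans (integral_nonneg fun z => sq_nonneg _) hg2le
  -- finish
  have hintg2_nonneg : 0 ≤ ∫ z, g z ^ 2 ∂γ := integral_nonneg fun z => sq_nonneg _
  have hintd2_nonneg : 0 ≤ ∫ z, d z ^ 2 ∂γ := integral_nonneg fun z => sq_nonneg _
  calc (∫ u, F u ∂μ') - ∫ u, F u ∂μ ≤ C * ∫ z, g z * d z ∂γ := by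
        rw [step1]; rw [step3] at step2; exact step2
    _ ≤ C * ((∫ z, g z ^ (2:ℝ) ∂γ) ^ ((1:ℝ)/2) * (∫ z, d z ^ (2:ℝ) ∂γ) ^ ((1:ℝ)/2)) :=
        mul_le_mul_of_nonneg_left step4 hC0
    _ = C * (Real.sqrt (∫ z, g z ^ 2 ∂γ) * Real.sqrt (∫ z, d z ^ 2 ∂γ)) := by
        rw [hrpow_pow g hg0, hrpow_pow d hd0, hsqrt_eq, hsqrt_eq]
    _ ≤ C * (Real.sqrt S * Real.sqrt (∫ z, d z ^ 2 ∂γ)) := by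
        refine mul_le_mul_of_nonneg_left (mul_le_mul_of_nonneg_right
          (Real.sqrt_le_sqrt hg2le) (Real.sqrt_nonneg _)) hC0
    _ = C * Real.sqrt S * Real.sqrt (∫⁻ z, edist z.1 z.2 ^ 2 ∂γ).toReal := by
        rw [hd2eq]; ring

end Aux

/-- distribution shift bound in the `W₂` metric for Lipschitz maps between
real separable Hilbert spaces, for probability measures with finite second moments. -/
theorem w2_distribution_shift
    {U Y : Type*}
    [NormedAddCommGroup U] [InnerProductSpace ℝ U] [CompleteSpace U]
    [SecondCountableTopology U] [MeasurableSpace U] [BorelSpace U]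
    [NormedAddCommGroup Y] [InnerProductSpace ℝ Y] [CompleteSpace Y]
    [SecondCountableTopology Y]
    (G1 G2 : U → Y) (K1 K2 : NNReal)
    (h1 : LipschitzWith K1 G1) (h2 : LipschitzWith K2 G2)
    (C : ℝ) (hC : C = (K1 : ℝ) + (K2 : ℝ))
    (μ μ' : Measure U) [IsProbabilityMeasure μ] [IsProbabilityMeasure μ']
    (hm : Integrable (fun u => ‖u‖ ^ 2) μ) (hm' : Integrable (fun u => ‖u‖ ^ 2) μ') :
    ∫ u', ‖G1 u' - G2 u'‖ ^ 2 ∂μ' ≤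
      ∫ u, ‖G1 u - G2 u‖ ^ 2 ∂μ +
        C * Real.sqrt (4 * C ^ 2 * ((∫ u, ‖u‖ ^ 2 ∂μ) + ∫ u, ‖u‖ ^ 2 ∂μ') +
            16 * ‖G1 0‖ ^ 2 + 16 * ‖G2 0‖ ^ 2) * wasserstein2 μ μ' := by
  classical
  have hC0 : (0 : ℝ) ≤ C := by rw [hC]; positivity
  set S : ℝ := 4 * C ^ 2 * ((∫ u, ‖u‖ ^ 2 ∂μ) + ∫ u, ‖u‖ ^ 2 ∂μ') +
      16 * ‖G1 0‖ ^ 2 + 16 * ‖G2 0‖ ^ 2 with hS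
  set Cpl : Set (Measure (U × U)) :=
    {γ : Measure (U × U) | γ.map Prod.fst = μ ∧ γ.map Prod.snd = μ'} with hCpl
  set K : ENNReal := ⨅ γ ∈ Cpl, ∫⁻ z, edist z.1 z.2 ^ 2 ∂γ with hK
  have hW : wasserstein2 μ μ' = Real.sqrt K.toReal := rfl
  -- the product measure is a coupling with finite cost
  have hmem : μ.prod μ' ∈ Cpl := by
    constructor
    · rw [Measure.map_fst_prod, measure_univ, one_smul]
    · rw [Measure.map_snd_prod, measure_univ, one_smul]
  have hmom : ∀ (ν : Measure U), Integrable (fun u : U => ‖u‖ ^ 2) ν →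
      (∫⁻ u, ((‖u‖₊ : ENNReal)) ^ 2 ∂ν) ≠ ⊤ := by
    intro ν hν
    have h2 := hν.2
    have : ∀ u : U, ((‖u‖₊ : ENNReal)) ^ 2 = (‖(‖u‖ ^ 2)‖₊ : ENNReal) := by
      intro u
      rw [nnnorm_pow, nnnorm_norm, ENNReal.coe_pow]
    rw [lintegral_congr this]
    exact h2.ne
  have hnmeas : Measurable (fun u : U => ((‖u‖₊ : ENNReal)) ^ 2) :=
    measurable_nnnorm.coe_nnreal_ennreal.pow_const 2
  have hpt : ∀ z : U × U, edist z.1 z.2 ^ 2 ≤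
      4 * ((‖z.1‖₊ : ENNReal)) ^ 2 + 4 * ((‖z.2‖₊ : ENNReal)) ^ 2 := by
    intro z
    set a : ENNReal := (‖z.1‖₊ : ENNReal)
    set b : ENNReal := (‖z.2‖₊ : ENNReal)
    have h1 : edist z.1 z.2 ≤ a + b := by
      have h' := ENNReal.coe_le_coe.mpr (nnnorm_sub_le z.1 z.2)
      rw [ENNReal.coe_add] at h'
      rw [edist_nndist, nndist_eq_nnnorm]
      exact h'
    rcases le_total a b with h | h
    · calc edist z.1 z.2 ^ 2 ≤ (2 * b) ^ 2 := by
            refine pow_le_pow_left' (h1.trans ?_) 2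
            rw [two_mul]; exact add_le_add h le_rfl
        _ = 4 * b ^ 2 := by ring
        _ ≤ 4 * a ^ 2 + 4 * b ^ 2 := le_add_self
    · calc edist z.1 z.2 ^ 2 ≤ (2 * a) ^ 2 := by
            refine pow_le_pow_left' (h1.trans ?_) 2
            rw [two_mul]; exact add_le_add le_rfl h
        _ = 4 * a ^ 2 := by ring
        _ ≤ 4 * a ^ 2 + 4 * b ^ 2 := le_self_add
  have hfin : (∫⁻ z, edist z.1 z.2 ^ 2 ∂(μ.prod μ')) ≠ ⊤ := by
    have hb : (∫⁻ z, edist z.1 z.2 ^ 2 ∂(μ.prod μ')) ≤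
        ∫⁻ z : U × U, (4 * ((‖z.1‖₊ : ENNReal)) ^ 2 + 4 * ((‖z.2‖₊ : ENNReal)) ^ 2)
          ∂(μ.prod μ') := lintegral_mono hpt
    have e1 : ∫⁻ z : U × U, ((‖z.1‖₊ : ENNReal)) ^ 2 ∂(μ.prod μ') =
        ∫⁻ u, ((‖u‖₊ : ENNReal)) ^ 2 ∂μ := by
      have h' := lintegral_map (μ := μ.prod μ') hnmeas measurable_fst
      rw [hmem.1] at h'
      exact h'.symm
    have e2 : ∫⁻ z : U × U, ((‖z.2‖₊ : ENNReal)) ^ 2 ∂(μ.prod μ') =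
        ∫⁻ u, ((‖u‖₊ : ENNReal)) ^ 2 ∂μ' := by
      have h' := lintegral_map (μ := μ.prod μ') hnmeas measurable_snd
      rw [hmem.2] at h'
      exact h'.symm
    have m1 : Measurable fun z : U × U => 4 * ((‖z.1‖₊ : ENNReal)) ^ 2 :=
      (hnmeas.comp measurable_fst).const_mul 4
    have m2 : Measurable fun z : U × U => ((‖z.1‖₊ : ENNReal)) ^ 2 :=
      hnmeas.comp measurable_fst
    have m3 : Measurable fun z : U × U => ((‖z.2‖₊ : ENNReal)) ^ 2 :=
      hnmeas.comp measurable_snd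
    have hsplit : ∫⁻ z : U × U, (4 * ((‖z.1‖₊ : ENNReal)) ^ 2 +
        4 * ((‖z.2‖₊ : ENNReal)) ^ 2) ∂(μ.prod μ') =
        4 * (∫⁻ u, ((‖u‖₊ : ENNReal)) ^ 2 ∂μ) + 4 * ∫⁻ u, ((‖u‖₊ : ENNReal)) ^ 2 ∂μ' := by
      rw [lintegral_add_left m1, lintegral_const_mul 4 m2, lintegral_const_mul 4 m3, e1, e2]
    refine ne_top_of_le_ne_top ?_ hb
    rw [hsplit]
    exact ENNReal.add_ne_top.mpr
      ⟨ENNReal.mul_ne_top (by norm_num) (hmom μ hm),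
       ENNReal.mul_ne_top (by norm_num) (hmom μ' hm')⟩
  have hKfin : K ≠ ⊤ := by
    refine ne_top_of_le_ne_top hfin ?_
    exact iInf₂_le (μ.prod μ') hmem
  have hCS : 0 ≤ C * Real.sqrt S := mul_nonneg hC0 (Real.sqrt_nonneg _)
  set D : ℝ := (∫ u, ‖G1 u - G2 u‖ ^ 2 ∂μ') - ∫ u, ‖G1 u - G2 u‖ ^ 2 ∂μ with hD
  have main : ∀ ε : ℝ, 0 < ε →
      D ≤ C * Real.sqrt S * (Real.sqrt K.toReal + Real.sqrt ε) := by
    intro ε hε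
    obtain ⟨γ, hγmem, hγlt⟩ : ∃ γ ∈ Cpl,
        (∫⁻ z, edist z.1 z.2 ^ 2 ∂γ) < K + ENNReal.ofReal ε := by
      by_contra h
      push_neg at h
      have hle : K + ENNReal.ofReal ε ≤ K := le_iInf₂ h
      have hlt : K < K + ENNReal.ofReal ε :=
        ENNReal.lt_add_right hKfin (ENNReal.ofReal_pos.mpr hε).ne'
      exact absurd hle hlt.not_ge
    have hKe : K + ENNReal.ofReal ε ≠ ⊤ :=
      ENNReal.add_ne_top.mpr ⟨hKfin, ENNReal.ofReal_ne_top⟩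
    have hγcost : (∫⁻ z, edist z.1 z.2 ^ 2 ∂γ) ≠ ⊤ :=
      (hγlt.trans_le le_top).ne
    have hb := aux_coupling_bound G1 G2 K1 K2 h1 h2 C hC μ μ' hm hm' γ
      hγmem.1 hγmem.2 hγcost
    refine hb.trans ?_
    have ht1 : (∫⁻ z, edist z.1 z.2 ^ 2 ∂γ).toReal ≤ K.toReal + ε := by
      have := ENNReal.toReal_mono hKe hγlt.le
      rwa [ENNReal.toReal_add hKfin ENNReal.ofReal_ne_top,
        ENNReal.toReal_ofReal hε.le] at this
    have hK0 : 0 ≤ K.toReal := ENNReal.toReal_nonneg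
    have ht2 : Real.sqrt (∫⁻ z, edist z.1 z.2 ^ 2 ∂γ).toReal ≤
        Real.sqrt K.toReal + Real.sqrt ε := by
      refine (Real.sqrt_le_sqrt ht1).trans ?_
      calc Real.sqrt (K.toReal + ε) ≤
          Real.sqrt ((Real.sqrt K.toReal + Real.sqrt ε) ^ 2) := by
            refine Real.sqrt_le_sqrt ?_
            nlinarith [Real.sq_sqrt hK0, Real.sq_sqrt hε.le,
              Real.sqrt_nonneg K.toReal, Real.sqrt_nonneg ε,
              mul_nonneg (Real.sqrt_nonneg K.toReal) (Real.sqrt_nonneg ε)]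
        _ = Real.sqrt K.toReal + Real.sqrt ε := Real.sqrt_sq (by positivity)
    exact mul_le_mul_of_nonneg_left ht2 hCS
  have hDfin : D ≤ C * Real.sqrt S * Real.sqrt K.toReal := by
    refine le_of_forall_pos_le_add fun δ hδ => ?_
    have hden : (0:ℝ) < C * Real.sqrt S + 1 := by linarith
    have hε : (0:ℝ) < (δ / (C * Real.sqrt S + 1)) ^ 2 := by positivity
    have hmain := main _ hε
    rw [Real.sqrt_sq (by positivity)] at hmain
    have hfrac : C * Real.sqrt S * (δ / (C * Real.sqrt S + 1)) ≤ δ := by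
      have hq : 0 ≤ δ / (C * Real.sqrt S + 1) := by positivity
      have h2 : C * Real.sqrt S * (δ / (C * Real.sqrt S + 1)) ≤
          (C * Real.sqrt S + 1) * (δ / (C * Real.sqrt S + 1)) := by nlinarith
      have h3 : (C * Real.sqrt S + 1) * (δ / (C * Real.sqrt S + 1)) = δ := by
        field_simp
      rwa [h3] at h2
    calc D ≤ C * Real.sqrt S * (Real.sqrt K.toReal + δ / (C * Real.sqrt S + 1)) := hmain
      _ = C * Real.sqrt S * Real.sqrt K.toReal +
          C * Real.sqrt S * (δ / (C * Real.sqrt S + 1)) := by ring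
      _ ≤ C * Real.sqrt S * Real.sqrt K.toReal + δ := by linarith
  rw [hW]
  have := hDfin
  rw [hD] at this
  linarith
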